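/- If A ∈ ℝ^{N×B} has i.i.d. columns each uniformly distributed over the standard basis vectors of ℝ^N, then for any fixed Z ∈ ℝ^{N×N}, E[A Aᵀ Z A Aᵀ] = (B/N)·diag(Z) + (B(B−1)/N²)·Z, where diag(Z) is the diagonal matrix with entries Z_{ii}. -/

import Mathlib

open MeasureTheory ProbabilityTheory Matrix

/-- Entrywise expectation of a random matrix. -/
noncomputable def mExp {Ω : Type*} [MeasureSpace Ω] {m n : ℕ}
    (M : Ω → Matrix (Fin m) (Fin n) ℝ) : Matrix (Fin m) (Fin n) ℝ :=
  Matrix.of fun i j => ∫ ω, M ω i j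

/-- If `A ∈ ℝ^{N×B}` has i.i.d. columns, each uniformly distributed over the
standard basis vectors of `ℝ^N`, then for any fixed `Z ∈ ℝ^{N×N}`,
`E[A Aᵀ Z A Aᵀ] = (B/N)·diag(Z) + (B(B−1)/N²)·Z`. -/

theorem entry_eq' {Ω : Type*} {N B : ℕ} (c : Fin B → Ω → Fin N) (ω : Ω)
    (Z : Matrix (Fin N) (Fin N) ℝ) (i j : Fin N)
    (A : Matrix (Fin N) (Fin B) ℝ)
    (hA : A = Matrix.of (fun i j => if c j ω = i then (1 : ℝ) else 0)) :
    (A * Aᵀ * Z * A * Aᵀ) i j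
      = ∑ b : Fin B, ∑ b' : Fin B,
          (if c b ω = i then (1:ℝ) else 0) * (if c b' ω = j then 1 else 0) * Z i j := by
  subst hA
  simp only [Matrix.mul_apply, Matrix.transpose_apply, Matrix.of_apply,
    Finset.sum_mul, Finset.mul_sum, ite_mul, mul_ite, one_mul, mul_one, zero_mul, mul_zero]
  simp only [Finset.sum_ite_eq, Finset.mem_univ, if_true]
  rw [Finset.sum_comm (γ := Fin B)]
  refine Finset.sum_congr rfl fun b' _ => ?_
  by_cases h2 : c b' ω = j
  · rw [if_pos h2, Finset.sum_comm]
    simp only [Finset.sum_ite_eq, Finset.mem_univ, if_true]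
    refine Finset.sum_congr rfl fun b _ => ?_
    by_cases h1 : c b ω = i <;> simp [h1, h2]
  · rw [if_neg h2]
    refine (Finset.sum_eq_zero fun b _ => ?_).symm
    simp [h2]

theorem stmt_3' {Ω : Type*} [MeasureSpace Ω] [IsProbabilityMeasure (volume : Measure Ω)]
    {N B : ℕ} (hN : 1 ≤ N) (hB : 1 ≤ B)
    (c : Fin B → Ω → Fin N) (hmeas : ∀ j, Measurable (c j))
    (hindep : iIndepFun c volume)
    (hunif : ∀ j i, (volume {ω | c j ω = i}) = (N : ENNReal)⁻¹)
    (A : Ω → Matrix (Fin N) (Fin B) ℝ)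
    (hA : ∀ ω, A ω = Matrix.of (fun i j => if c j ω = i then (1 : ℝ) else 0))
    (Z : Matrix (Fin N) (Fin N) ℝ) :
    (Matrix.of fun i j => ∫ ω, (A ω * (A ω)ᵀ * Z * (A ω) * (A ω)ᵀ) i j) =
      ((B : ℝ) / (N : ℝ)) • Matrix.diagonal (fun i => Z i i)
        + ((B : ℝ) * ((B : ℝ) - 1) / (N : ℝ) ^ 2) • Z := by
  have hN0 : (N : ℝ) ≠ 0 := Nat.cast_ne_zero.2 (by omega)
  ext i j
  simp only [Matrix.of_apply]
  -- sets and measurability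
  set S : Fin B → Fin N → Set Ω := fun b k => {ω | c b ω = k} with hS
  have hSmeas : ∀ b k, MeasurableSet (S b k) := fun b k =>
    (hmeas b) (measurableSet_singleton k)
  -- the individual integrand
  set F : Fin B → Fin B → Ω → ℝ := fun b b' ω =>
    (if c b ω = i then (1:ℝ) else 0) * (if c b' ω = j then 1 else 0) * Z i j with hF
  have hFind : ∀ b b', F b b' = fun ω =>
      ((S b i ∩ S b' j).indicator (fun _ => (1:ℝ)) ω) * Z i j := by
    intro b b'
    funext ω
    simp only [hF, Set.indicator_apply, Set.mem_inter_iff, hS, Set.mem_setOf_eq]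
    by_cases h1 : c b ω = i <;> by_cases h2 : c b' ω = j <;> simp [h1, h2]
  have hFint : ∀ b b', Integrable (F b b') volume := by
    intro b b'
    rw [hFind]
    exact (((integrable_const (1:ℝ)).indicator ((hSmeas b i).inter (hSmeas b' j))).mul_const _)
  have hFval : ∀ b b', ∫ ω, F b b' ω =
      (volume (S b i ∩ S b' j)).toReal * Z i j := by
    intro b b'
    rw [hFind, integral_mul_const, integral_indicator_const (1:ℝ)
      ((hSmeas b i).inter (hSmeas b' j)), smul_eq_mul, mul_one, measureReal_def]
  -- measures
  have htoReal : ((N : ENNReal)⁻¹).toReal = (N : ℝ)⁻¹ := by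
    simp [ENNReal.toReal_inv]
  have hvol : ∀ b b', (volume (S b i ∩ S b' j)).toReal =
      if b = b' then (if i = j then (N:ℝ)⁻¹ else 0) else (N:ℝ)⁻¹ * (N:ℝ)⁻¹ := by
    intro b b'
    by_cases hbb : b = b'
    · subst hbb
      rw [if_pos rfl]
      by_cases hij : i = j
      · subst hij
        rw [if_pos rfl, Set.inter_self, hunif, htoReal]
      · rw [if_neg hij]
        have : S b i ∩ S b j = ∅ := by
          ext ω
          simp only [Set.mem_inter_iff, hS, Set.mem_setOf_eq, Set.mem_empty_iff_false, iff_false,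
            not_and]
          intro h1 h2; exact hij (h1.symm.trans h2)
        rw [this]; simp
    · rw [if_neg hbb]
      have hpre : ∀ (b : Fin B) (k : Fin N), S b k = c b ⁻¹' {k} := by
        intro b k; ext ω; simp [hS]
      rw [hpre, hpre, (hindep.indepFun hbb).measure_inter_preimage_eq_mul {i} {j}
        (measurableSet_singleton _) (measurableSet_singleton _), ← hpre, ← hpre,
        hunif, hunif, ENNReal.toReal_mul, htoReal]
  -- rewrite the integrand
  have hint : ∫ ω, (A ω * (A ω)ᵀ * Z * (A ω) * (A ω)ᵀ) i j
      = ∑ b : Fin B, ∑ b' : Fin B, ∫ ω, F b b' ω := by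
    rw [show (fun ω => (A ω * (A ω)ᵀ * Z * (A ω) * (A ω)ᵀ) i j)
        = fun ω => ∑ b : Fin B, ∑ b' : Fin B, F b b' ω from
      funext fun ω => entry_eq' c ω Z i j (A ω) (hA ω)]
    rw [integral_finset_sum _ (fun b _ => integrable_finset_sum _ (fun b' _ => hFint b b'))]
    exact Finset.sum_congr rfl fun b _ =>
      integral_finset_sum _ (fun b' _ => hFint b b')
  rw [hint]
  -- compute the sum
  have hrow : ∀ (d o : ℝ) (b : Fin B), (∑ b' : Fin B, if b = b' then d else o)
      = d + ((B:ℝ) - 1) * o := by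
    intro d o b
    have h : ∀ b' : Fin B, (if b = b' then d else o) = o + (if b = b' then d - o else 0) := by
      intro b'; split_ifs <;> ring
    simp only [h, Finset.sum_add_distrib, Finset.sum_const, Finset.card_univ,
      Fintype.card_fin, Finset.sum_ite_eq, Finset.mem_univ, if_true, nsmul_eq_mul]
    ring
  have : ∑ b : Fin B, ∑ b' : Fin B, ∫ ω, F b b' ω
      = (B:ℝ) * (((if i = j then (N:ℝ)⁻¹ else 0) + ((B:ℝ) - 1) * ((N:ℝ)⁻¹ * (N:ℝ)⁻¹)) * Z i j) := by
    rw [show (fun b => ∑ b' : Fin B, ∫ ω, F b b' ω)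
        = fun b => ((if i = j then (N:ℝ)⁻¹ else 0) + ((B:ℝ) - 1) * ((N:ℝ)⁻¹ * (N:ℝ)⁻¹)) * Z i j from
      funext fun b => by
        rw [show (fun b' => ∫ ω, F b b' ω)
            = fun b' => (if b = b' then (if i = j then (N:ℝ)⁻¹ else 0) else (N:ℝ)⁻¹ * (N:ℝ)⁻¹) * Z i j from
          funext fun b' => by rw [hFval, hvol]]
        rw [← Finset.sum_mul, hrow]]
    rw [Finset.sum_const, Finset.card_univ, Fintype.card_fin, nsmul_eq_mul]
  rw [this]
  simp only [Matrix.add_apply, Matrix.smul_apply, Matrix.diagonal_apply, smul_eq_mul]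
  by_cases hij : i = j
  · subst hij
    rw [if_pos rfl, if_pos rfl]
    field_simp
  · rw [if_neg hij, if_neg hij]
    field_simp
    ring

theorem stmt_3 {Ω : Type*} [MeasureSpace Ω] [IsProbabilityMeasure (volume : Measure Ω)]
    {N B : ℕ} (hN : 1 ≤ N) (hB : 1 ≤ B)
    (c : Fin B → Ω → Fin N) (hmeas : ∀ j, Measurable (c j))
    (hindep : iIndepFun c volume)
    (hunif : ∀ j i, (volume {ω | c j ω = i}) = (N : ENNReal)⁻¹)
    (A : Ω → Matrix (Fin N) (Fin B) ℝ)
    (hA : ∀ ω, A ω = Matrix.of (fun i j => if c j ω = i then (1 : ℝ) else 0))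
    (Z : Matrix (Fin N) (Fin N) ℝ) :
    mExp (fun ω => A ω * (A ω)ᵀ * Z * (A ω) * (A ω)ᵀ) =
      ((B : ℝ) / (N : ℝ)) • Matrix.diagonal (fun i => Z i i)
        + ((B : ℝ) * ((B : ℝ) - 1) / (N : ℝ) ^ 2) • Z := by
  unfold mExp
  exact stmt_3' hN hB c hmeas hindep hunif A hA Z
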